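/- With f = X(X−1)(X−α₁)(X−α₂)(X−α₃) ∈ 𝔽_p[X], c_k the coefficient of X^k in f^{(p−1)/2}, F a finite field with p² elements, and f̃ ∈ F[X] the image of f under the embedding 𝔽_p → F, one has ∑_{α ∈ F} ( f̃(α) · f̃(α^p) )^{(p−1)/2} = −( 2·c̃_{p−2}·c̃_{2p−1} + c̃_{p−1}² + c̃_{2p−2}² ), where c̃_k denotes the image of c_k in F. -/

import Mathlib

open Polynomial Finset

lemma sum_pow_field {K : Type*} [Field K] [Fintype K] (i : ℕ) (hi : i ≠ 0) :
    ∑ x : K, x ^ i = if (Fintype.card K - 1) ∣ i then -1 else 0 := by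
  classical
  let φ : Kˣ ↪ K := ⟨fun x ↦ x, Units.val_injective⟩
  have huniv : univ.map φ = univ \ {0} := by
    ext x
    simp only [mem_map, mem_univ, Function.Embedding.coeFn_mk, true_and, mem_sdiff,
      mem_singleton, φ]
    exact isUnit_iff_ne_zero
  calc
    ∑ x : K, x ^ i = ∑ x ∈ univ \ {(0 : K)}, x ^ i := by
      rw [← sum_sdiff ({0} : Finset K).subset_univ, sum_singleton, zero_pow hi, add_zero]
    _ = ∑ x : Kˣ, (x : K) ^ i := by simp [φ, ← huniv, univ.sum_map φ]
    _ = _ := FiniteField.sum_pow_units K i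

lemma sum_eval_ff {K : Type*} [Field K] [Fintype K] (s : ℕ) (hs : 2 ≤ s)
    (hcard : Fintype.card K = (2*s+1)^2) (G : K[X]) (hdeg : G.natDegree < 10*s^2+10*s+1) :
    ∑ α : K, G.eval α = -(G.coeff (4*s^2+4*s) + G.coeff (8*s^2+8*s)) := by
  classical
  have hq : Fintype.card K - 1 = 4*s^2+4*s := by
    rw [hcard]
    have : (2*s+1)^2 = 4*s^2+4*s+1 := by ring
    omega
  set n := 10*s^2+10*s+1 with hn
  have step1 : ∑ α : K, G.eval α = ∑ k ∈ range n, G.coeff k * ∑ α : K, α^k := by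
    calc ∑ α : K, G.eval α = ∑ α : K, ∑ k ∈ range n, G.coeff k * α^k :=
          Finset.sum_congr rfl fun α _ => eval_eq_sum_range' hdeg α
      _ = ∑ k ∈ range n, ∑ α : K, G.coeff k * α^k := Finset.sum_comm
      _ = _ := by simp [Finset.mul_sum]
  rw [step1]
  set S : Finset ℕ := {4*s^2+4*s, 8*s^2+8*s} with hS
  have hsub : S ⊆ range n := by
    intro k hk
    rw [hS] at hk
    simp only [Finset.mem_insert, Finset.mem_singleton] at hk
    rcases hk with rfl | rfl <;> · rw [Finset.mem_range]; linarith
  have hzero : ∀ k ∈ range n, k ∉ S → G.coeff k * ∑ α : K, α^k = 0 := by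
    intro k hkr hknot
    rw [Finset.mem_range] at hkr
    by_cases hk0 : k = 0
    · subst hk0
      simp only [pow_zero, Finset.sum_const, card_univ, nsmul_eq_mul, mul_one]
      rw [FiniteField.cast_card_eq_zero, mul_zero]
    · rw [sum_pow_field k hk0, hq]
      by_cases hdvd : 4*s^2+4*s ∣ k
      · exfalso
        obtain ⟨t, rfl⟩ := hdvd
        have ht3 : t ≤ 2 := by
          by_contra h
          push_neg at h
          have h2 : (4*s^2+4*s)*3 ≤ (4*s^2+4*s)*t := Nat.mul_le_mul_left _ h
          have h3 : (4*s^2+4*s)*3 = 12*s^2+12*s := by ring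
          have hs1 : 1 ≤ s^2 := Nat.one_le_pow _ _ (by omega)
          linarith [hn]
        interval_cases t
        · exact hk0 (by ring)
        · exact hknot (by simp [hS])
        · refine hknot ?_
          have : (4*s^2+4*s)*2 = 8*s^2+8*s := by ring
          rw [this, hS]
          simp
      · rw [if_neg hdvd, mul_zero]
  rw [← Finset.sum_subset hsub hzero]
  have hne : 4*s^2+4*s ≠ 8*s^2+8*s := by intro h; omega
  rw [hS, Finset.sum_pair hne, sum_pow_field _ (by intro h; omega),
    sum_pow_field _ (by intro h; omega), hq, if_pos dvd_rfl,
    if_pos ⟨2, by ring⟩]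
  ring

lemma coeff_expand_mul_two_terms {R : Type*} [CommSemiring R] (g : R[X]) (s p : ℕ)
    (hp : 0 < p) (hs : 2 ≤ s)
    (h0 : ∀ j, 5*s < j → g.coeff j = 0) (m a₁ b₁ a₂ b₂ : ℕ)
    (hm1 : p * a₁ + b₁ = m) (hm2 : p * a₂ + b₂ = m)
    (hbne : b₁ ≠ b₂)
    (huniq : ∀ a b, p * a + b = m → a ≤ 5*s → b ≤ 5*s →
      (a = a₁ ∧ b = b₁) ∨ (a = a₂ ∧ b = b₂)) :
    ((expand R p g) * g).coeff m
      = g.coeff a₁ * g.coeff b₁ + g.coeff a₂ * g.coeff b₂ := by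
  rw [coeff_mul]
  set S : Finset (ℕ × ℕ) := {(p * a₁, b₁), (p * a₂, b₂)} with hS
  have hsub : S ⊆ antidiagonal m := by
    intro x hx
    rw [hS] at hx
    simp only [Finset.mem_insert, Finset.mem_singleton] at hx
    rcases hx with rfl | rfl <;> simp [HasAntidiagonal.mem_antidiagonal, hm1, hm2]
  have hzero : ∀ x ∈ antidiagonal m, x ∉ S →
      (expand R p g).coeff x.1 * g.coeff x.2 = 0 := by
    rintro ⟨i, j⟩ hmem hnot
    rw [HasAntidiagonal.mem_antidiagonal] at hmem
    rw [coeff_expand hp]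
    by_cases hdvd : p ∣ i
    · rw [if_pos hdvd]
      obtain ⟨a, rfl⟩ := hdvd
      rw [Nat.mul_div_cancel_left _ hp]
      by_cases ha : 5*s < a
      · rw [h0 a ha, zero_mul]
      by_cases hj : 5*s < j
      · rw [h0 j hj, mul_zero]
      push_neg at ha hj
      exfalso
      rcases huniq a j hmem ha hj with ⟨rfl, rfl⟩ | ⟨rfl, rfl⟩
      · exact hnot (by simp [hS])
      · exact hnot (by simp [hS])
    · rw [if_neg hdvd, zero_mul]
  rw [← Finset.sum_subset hsub hzero]
  have hne : (p * a₁, b₁) ≠ (p * a₂, b₂) := by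
    intro h
    exact hbne (by simpa using congrArg Prod.snd h)
  rw [hS, Finset.sum_pair hne, coeff_expand_mul' hp, coeff_expand_mul' hp]

lemma uniq1 (s : ℕ) (hs : 2 ≤ s) : ∀ a b, (2*s+1)*a + b = 4*s^2+4*s → a ≤ 5*s → b ≤ 5*s →
    (a = 2*s ∧ b = 2*s) ∨ (a = 2*s-1 ∧ b = 4*s+1) := by
  intro a b heq ha hb
  have key1 : a ≤ 2*s := by
    by_contra h
    push_neg at h
    have h2 : (2*s+1)*(2*s+1) ≤ (2*s+1)*a := Nat.mul_le_mul_left _ h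
    have h3 : (2*s+1)*(2*s+1) = 4*s^2+4*s+1 := by ring
    linarith
  have key2 : 2*s ≤ a + 1 := by
    by_contra h
    push_neg at h
    have h2 : (2*s+1)*(a+2) ≤ (2*s+1)*(2*s) := Nat.mul_le_mul_left _ (by omega)
    have h3 : (2*s+1)*(a+2) = (2*s+1)*a + (4*s+2) := by ring
    have h4 : (2*s+1)*(2*s) = 4*s^2+2*s := by ring
    linarith
  rcases (by omega : a = 2*s ∨ a + 1 = 2*s) with rfl | hA
  · left
    have h4 : (2*s+1)*(2*s) = 4*s^2+2*s := by ring
    exact ⟨rfl, by linarith⟩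
  · right
    have h5 : (2*s+1)*(a+1) = (2*s+1)*a + (2*s+1) := by ring
    have h6 : (2*s+1)*(a+1) = (2*s+1)*(2*s) := by rw [hA]
    have h4 : (2*s+1)*(2*s) = 4*s^2+2*s := by ring
    exact ⟨by omega, by linarith⟩

lemma uniq2 (s : ℕ) (hs : 2 ≤ s) : ∀ a b, (2*s+1)*a + b = 8*s^2+8*s → a ≤ 5*s → b ≤ 5*s →
    (a = 4*s ∧ b = 4*s) ∨ (a = 4*s+1 ∧ b = 2*s-1) := by
  intro a b heq ha hb
  have key1 : a ≤ 4*s+1 := by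
    by_contra h
    push_neg at h
    have h2 : (2*s+1)*(4*s+2) ≤ (2*s+1)*a := Nat.mul_le_mul_left _ h
    have h3 : (2*s+1)*(4*s+2) = 8*s^2+8*s+2 := by ring
    linarith
  have key2 : 4*s ≤ a := by
    by_contra h
    push_neg at h
    have h2 : (2*s+1)*(a+1) ≤ (2*s+1)*(4*s) := Nat.mul_le_mul_left _ (by omega)
    have h3 : (2*s+1)*(a+1) = (2*s+1)*a + (2*s+1) := by ring
    have h4 : (2*s+1)*(4*s) = 8*s^2+4*s := by ring
    linarith
  rcases (by omega : a = 4*s ∨ a = 4*s+1) with rfl | rfl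
  · left
    have h4 : (2*s+1)*(4*s) = 8*s^2+4*s := by ring
    exact ⟨rfl, by linarith⟩
  · right
    have h4 : (2*s+1)*(4*s+1) = 8*s^2+6*s+1 := by ring
    have hb1 : b + 1 = 2*s := by linarith
    exact ⟨rfl, by omega⟩

lemma eval_pow_card_eq {K : Type*} [Field K] (p : ℕ) [Fact p.Prime] [CharP K p]
    (ι : ZMod p →+* K) (f : (ZMod p)[X]) (α : K) :
    (f.map ι).eval (α ^ p) = ((f.map ι).eval α) ^ p := by
  have hcomp : (frobenius K p).comp ι = ι := by
    ext x
    simp only [RingHom.comp_apply, frobenius_def, ← map_pow, ZMod.pow_card]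
  calc (f.map ι).eval (α ^ p)
      = ((f.map ι).map (frobenius K p)).eval (frobenius K p α) := by
        rw [Polynomial.map_map, hcomp, frobenius_def]
    _ = frobenius K p ((f.map ι).eval α) := by
        rw [Polynomial.eval_map, Polynomial.eval₂_at_apply]
    _ = _ := frobenius_def ..

/-- For the quintic `f = X(X-1)(X-α₁)(X-α₂)(X-α₃)` over `𝔽_p` and `F` a field with `p²`
elements, with `f̃` the image of `f` in `F[X]`, one has
`∑_{α ∈ F} (f̃(α)·f̃(α^p))^((p-1)/2) = -(2 c̃_{p-2} c̃_{2p-1} + c̃_{p-1}² + c̃_{2p-2}²)`. -/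
theorem sum_ff_frob_pow_eq (p : ℕ) [Fact p.Prime] (hp : 5 ≤ p)
    (α₁ α₂ α₃ : ZMod p)
    (h12 : α₁ ≠ α₂) (h13 : α₁ ≠ α₃) (h23 : α₂ ≠ α₃)
    (h10 : α₁ ≠ 0) (h20 : α₂ ≠ 0) (h30 : α₃ ≠ 0)
    (h11 : α₁ ≠ 1) (h21 : α₂ ≠ 1) (h31 : α₃ ≠ 1)
    (f : Polynomial (ZMod p))
    (hf : f = X * (X - 1) * (X - C α₁) * (X - C α₂) * (X - C α₃))
    (c : ℕ → ZMod p) (hc : ∀ k, c k = (f ^ ((p - 1) / 2)).coeff k)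
    (F : Type*) [Field F] [Fintype F] (hF : Fintype.card F = p ^ 2)
    (ι : ZMod p →+* F) :
    ∑ α : F, ((f.map ι).eval α * (f.map ι).eval (α ^ p)) ^ ((p - 1) / 2) =
      -(2 * ι (c (p - 2)) * ι (c (2 * p - 1)) +
        ι (c (p - 1)) ^ 2 + ι (c (2 * p - 2)) ^ 2) := by
  classical
  have hpprime : p.Prime := Fact.out
  obtain ⟨s, hp2⟩ : ∃ s, p = 2*s+1 := by
    have : Odd p := hpprime.odd_of_ne_two (by omega)
    obtain ⟨s, hs⟩ := this
    exact ⟨s, by omega⟩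
  have hs2 : 2 ≤ s := by omega
  have hppos : 0 < p := by omega
  have hsdiv : (p - 1) / 2 = s := by omega
  have hCharP : CharP F p := charP_of_injective_ringHom ι.injective p
  -- degree bound on f
  have hdf : f.natDegree ≤ 5 := by
    rw [hf]
    have hX : (X : (ZMod p)[X]).natDegree ≤ 1 := natDegree_X_le
    have h1 : (X - 1 : (ZMod p)[X]).natDegree ≤ 1 := by
      rw [show (1 : (ZMod p)[X]) = C 1 by rw [map_one]]
      exact (natDegree_X_sub_C 1).le
    have hA1 := (natDegree_X_sub_C α₁).le
    have hA2 := (natDegree_X_sub_C α₂).le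
    have hA3 := (natDegree_X_sub_C α₃).le
    have d2 : (X * (X - 1) : (ZMod p)[X]).natDegree ≤ 2 := by
      have := natDegree_mul_le (p := (X : (ZMod p)[X])) (q := X - 1)
      omega
    have d3 : (X * (X - 1) * (X - C α₁) : (ZMod p)[X]).natDegree ≤ 3 := by
      have := natDegree_mul_le (p := (X * (X - 1) : (ZMod p)[X])) (q := X - C α₁)
      omega
    have d4 : (X * (X - 1) * (X - C α₁) * (X - C α₂) : (ZMod p)[X]).natDegree ≤ 4 := by
      have := natDegree_mul_le (p := (X * (X - 1) * (X - C α₁) : (ZMod p)[X])) (q := X - C α₂)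
      omega
    have := natDegree_mul_le (p := (X * (X - 1) * (X - C α₁) * (X - C α₂) : (ZMod p)[X]))
      (q := X - C α₃)
    omega
  set g : (ZMod p)[X] := f ^ s with hg
  have hcg : ∀ k, c k = g.coeff k := by
    intro k
    rw [hc, hsdiv]
  have hgdeg : ∀ j, 5*s < j → g.coeff j = 0 := by
    intro j hj
    apply coeff_eq_zero_of_natDegree_lt
    calc g.natDegree ≤ s * f.natDegree := natDegree_pow_le
      _ ≤ s * 5 := Nat.mul_le_mul_left _ hdf
      _ = 5 * s := by ring
      _ < j := hj
  -- f^(s*(p+1)) = expand p g * g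
  have hexp : expand (ZMod p) p g = g ^ p := by
    have h1 := map_frobenius_expand (p := p) g
    rwa [ZMod.frobenius_zmod, Polynomial.map_id] at h1
  have hfN : f ^ (s*(p+1)) = expand (ZMod p) p g * g := by
    rw [pow_mul, hexp, ← pow_succ]
  -- coefficient computations
  have hm2' : p * (2*s-1) + (4*s+1) = 4*s^2+4*s := by
    have h3 : 2*s-1+1 = 2*s := by omega
    have h2 : p*(2*s-1+1) = p*(2*s-1) + p := by ring
    rw [h3] at h2
    have h1 : p*(2*s) = 4*s^2+2*s := by rw [hp2]; ring
    rw [h1] at h2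
    rw [hp2] at h2 ⊢
    linarith
  have A1 : (f ^ (s*(p+1))).coeff (4*s^2+4*s)
      = g.coeff (2*s) * g.coeff (2*s) + g.coeff (2*s-1) * g.coeff (4*s+1) := by
    rw [hfN]
    exact coeff_expand_mul_two_terms g s p hppos hs2 hgdeg _ _ _ _ _
      (by rw [hp2]; ring) hm2' (by omega) (by rw [hp2]; exact uniq1 s hs2)
  have hm4' : p * (4*s+1) + (2*s-1) = 8*s^2+8*s := by
    have h1 : p*(4*s+1) = 8*s^2+6*s+1 := by rw [hp2]; ring
    rw [h1]
    omega
  have A2 : (f ^ (s*(p+1))).coeff (8*s^2+8*s)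
      = g.coeff (4*s) * g.coeff (4*s) + g.coeff (4*s+1) * g.coeff (2*s-1) := by
    rw [hfN]
    exact coeff_expand_mul_two_terms g s p hppos hs2 hgdeg _ _ _ _ _
      (by rw [hp2]; ring) hm4' (by omega) (by rw [hp2]; exact uniq2 s hs2)
  -- rewrite summand
  have hsummand : ∀ α : F, ((f.map ι).eval α * (f.map ι).eval (α ^ p)) ^ ((p - 1) / 2)
      = ((f ^ (s*(p+1))).map ι).eval α := by
    intro α
    rw [hsdiv, eval_pow_card_eq p ι f α]
    set x := (f.map ι).eval α with hx
    rw [Polynomial.map_pow, eval_pow]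
    calc (x * x ^ p) ^ s = (x ^ (p+1)) ^ s := by rw [pow_succ, mul_comm]
      _ = x ^ ((p+1)*s) := by rw [← pow_mul]
      _ = x ^ (s*(p+1)) := by rw [mul_comm]
  rw [Finset.sum_congr rfl fun α _ => hsummand α]
  -- apply the field sum lemma
  have hcard : Fintype.card F = (2*s+1)^2 := by rw [hF, hp2]
  have hdegG : ((f ^ (s*(p+1))).map ι).natDegree < 10*s^2+10*s+1 := by
    calc ((f ^ (s*(p+1))).map ι).natDegree ≤ (f ^ (s*(p+1))).natDegree := natDegree_map_le
      _ ≤ (s*(p+1)) * f.natDegree := natDegree_pow_le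
      _ ≤ (s*(p+1)) * 5 := Nat.mul_le_mul_left _ hdf
      _ = 10*s^2+10*s := by rw [hp2]; ring
      _ < 10*s^2+10*s+1 := by omega
  rw [sum_eval_ff s hs2 hcard _ hdegG]
  rw [coeff_map, coeff_map, A1, A2]
  have e1 : c (p-1) = g.coeff (2*s) := by rw [hcg]; congr 1; omega
  have e2 : c (p-2) = g.coeff (2*s-1) := by rw [hcg]; congr 1; omega
  have e3 : c (2*p-1) = g.coeff (4*s+1) := by rw [hcg]; congr 1; omega
  have e4 : c (2*p-2) = g.coeff (4*s) := by rw [hcg]; congr 1; omega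
  rw [e1, e2, e3, e4]
  rw [map_add, map_add, map_mul, map_mul, map_mul, map_mul]
  ring
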